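/- If α ≠ 0 and 0 ≤ j ≤ |I_α|, then L_n^α(m,j) is an indecomposable U(gl(n))-module: it cannot be written as a direct sum of two nonzero submodules. Indeed, every nonzero submodule contains the simple module V_n^α(m,∅). -/

import Mathlib

open Finsupp

/-- The space of Laurent polynomials `L_n = ℂ[x₁^{±1},...,xₙ^{±1}]`,
realized as finitely supported functions from exponent vectors to ℂ.
The monomial `x^k` is `Finsupp.single k 1`. -/
abbrev Lmon (n : ℕ) : Type := (Fin n → ℤ) →₀ ℂ

/-- The α-twisted action of the matrix unit `E_{ab}` on `L_n`:
`E_{ab} · x^k = (k_b + α_b) x^{k + e_a - e_b}`. -/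
noncomputable def Eab {n : ℕ} (α : Fin n → ℂ) (a b : Fin n) :
    Lmon n →ₗ[ℂ] Lmon n :=
  Finsupp.lsum ℂ (fun k => ((k b : ℂ) + α b) •
    Finsupp.lsingle (fun i => k i + (if i = a then 1 else 0) - (if i = b then 1 else 0)))

open scoped Classical in
/-- `V_n^α(m, J)`: the span of monomials `x^k` of total degree `m` such that
`{ℓ ∈ I_α : k_ℓ < 0} ⊆ J`, where `I_α = {ℓ : α_ℓ = 0}`. -/
noncomputable def Vmod {n : ℕ} (α : Fin n → ℂ) (m : ℤ) (J : Finset (Fin n)) :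
    Submodule ℂ (Lmon n) :=
  Submodule.span ℂ {f | ∃ k : Fin n → ℤ, f = Finsupp.single k (1 : ℂ) ∧
    (∑ i, k i) = m ∧ ∀ ℓ, α ℓ = 0 → k ℓ < 0 → ℓ ∈ J}

open scoped Classical in
/-- `L_n^α(m, j)`: the span of monomials `x^k` of total degree `m` with
`|{ℓ ∈ I_α : k_ℓ < 0}| ≤ j`  (the index `j` is an integer so that `j = -1`
gives the zero module). -/
noncomputable def LmodJ {n : ℕ} (α : Fin n → ℂ) (m j : ℤ) : Submodule ℂ (Lmon n) :=
  Submodule.span ℂ {f | ∃ k : Fin n → ℤ, f = Finsupp.single k (1 : ℂ) ∧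
    (∑ i, k i) = m ∧
    ((Finset.univ.filter (fun ℓ => α ℓ = 0 ∧ k ℓ < 0)).card : ℤ) ≤ j}

/-- A subspace of `L_n` is a `𝔤𝔩(n)`-submodule (equivalently a `U(𝔤𝔩(n))`-submodule)
iff it is invariant under all the operators `E_{ab}`. -/
def glInv {n : ℕ} (α : Fin n → ℂ) (p : Submodule ℂ (Lmon n)) : Prop :=
  ∀ a b : Fin n, ∀ f ∈ p, Eab α a b f ∈ p

/-- The `U(𝔤𝔩(n))`-submodule of `L_n^α` generated by `f`: the smallest subspace
containing `f` that is invariant under all `E_{ab}`. -/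
noncomputable def genMod {n : ℕ} (α : Fin n → ℂ) (f : Lmon n) : Submodule ℂ (Lmon n) :=
  sInf {p | f ∈ p ∧ glInv α p}

namespace Aux
variable {n : ℕ}

/-- shift of an exponent vector -/
def sh (k : Fin n → ℤ) (a b : Fin n) : Fin n → ℤ :=
  fun i => k i + (if i = a then 1 else 0) - (if i = b then 1 else 0)

lemma Eab_single (α : Fin n → ℂ) (a b : Fin n) (k : Fin n → ℤ) :
    Eab α a b (Finsupp.single k 1) = ((k b : ℂ) + α b) • Finsupp.single (sh k a b) 1 := by
  simp only [Eab, Finsupp.lsum_single, LinearMap.smul_apply, Finsupp.lsingle_apply]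
  rfl

lemma sh_self (k : Fin n → ℤ) (a : Fin n) : sh k a a = k := by
  funext i; simp [sh]

lemma sum_sh (k : Fin n → ℤ) (a b : Fin n) : ∑ i, sh k a b i = ∑ i, k i := by
  simp [sh, Finset.sum_add_distrib, Finset.sum_sub_distrib, Finset.sum_ite_eq']

lemma Eaa_apply (α : Fin n → ℂ) (a : Fin n) (f : Lmon n) (q : Fin n → ℤ) :
    Eab α a a f q = ((q a : ℂ) + α a) * f q := by
  induction f using Finsupp.induction_linear with
  | zero => simp
  | add f g hf hg => simp [hf, hg]; ring
  | single k c =>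
    have h1 : Eab α a a (Finsupp.single k c) = ((k a : ℂ) + α a) • Finsupp.single k c := by
      simp only [Eab, Finsupp.lsum_single, LinearMap.smul_apply, Finsupp.lsingle_apply]
      rw [show (fun i => (k i + if i = a then 1 else 0) - if i = a then 1 else 0) = k
        from sh_self k a]
    rw [h1]
    simp only [Finsupp.smul_apply, Finsupp.single_apply, smul_eq_mul]
    split
    · next h => subst h; ring
    · ring


lemma coeff_ne {β : ℂ} (h0 : β ≠ 0) (h1 : 0 ≤ β.re) (h2 : β.re < 1) (z : ℤ) :
    (z : ℂ) + β ≠ 0 := by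
  intro h
  have hb : β = ((-z : ℤ) : ℂ) := by push_cast; linear_combination h
  have hre : β.re = ((-z : ℤ) : ℝ) := by rw [hb]; simp
  rw [hre] at h1 h2
  have hz : -z = 0 := by exact_mod_cast
    (by constructor <;> [exact_mod_cast h1; exact_mod_cast h2] :
      (0:ℝ) ≤ ((-z : ℤ) : ℝ) ∧ ((-z : ℤ) : ℝ) < 1) |>.elim (fun a b => by
        have ha : (0:ℤ) ≤ -z := by exact_mod_cast a
        have hbb : (-z : ℤ) < 1 := by exact_mod_cast b
        omega)
  apply h0
  rw [hb, hz]; simp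

lemma step {α : Fin n → ℂ} {p : Submodule ℂ (Lmon n)} (hp : glInv α p)
    {k : Fin n → ℤ} (hk : Finsupp.single k (1:ℂ) ∈ p) (a b : Fin n)
    (hc : ((k b : ℂ) + α b) ≠ 0) : Finsupp.single (sh k a b) (1:ℂ) ∈ p := by
  have h1 := hp a b _ hk
  rw [Eab_single] at h1
  have h2 := p.smul_mem (((k b : ℂ) + α b)⁻¹) h1
  rwa [smul_smul, inv_mul_cancel₀ hc, one_smul] at h2

lemma extract {α : Fin n → ℂ} {p : Submodule ℂ (Lmon n)} (hp : glInv α p) :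
    ∀ N : ℕ, ∀ f : Lmon n, f ∈ p → f.support.card ≤ N →
      ∀ k, f k ≠ 0 → Finsupp.single k (1:ℂ) ∈ p := by
  intro N
  induction N with
  | zero =>
    intro f hf hcard k hk
    exact absurd (Finsupp.mem_support_iff.2 hk)
      (by simp [Finset.card_eq_zero.1 (Nat.le_zero.1 hcard)])
  | succ N IH =>
    intro f hf hcard k hk
    by_cases hs : ∃ k' ∈ f.support, k' ≠ k
    · obtain ⟨k', hk's, hk'k⟩ := hs
      obtain ⟨a, ha⟩ := Function.ne_iff.1 hk'k
      set g : Lmon n := Eab α a a f - ((k' a : ℂ) + α a) • f with hg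
      have hgap : ∀ q, g q = ((q a : ℂ) - (k' a : ℂ)) * f q := by
        intro q
        simp only [hg, Finsupp.sub_apply, Finsupp.smul_apply, Eaa_apply, smul_eq_mul]
        ring
      have hgp : g ∈ p := p.sub_mem (hp a a f hf) (p.smul_mem _ hf)
      have hsub : g.support ⊆ f.support.erase k' := by
        intro q hq
        rw [Finsupp.mem_support_iff, hgap] at hq
        rw [Finset.mem_erase, Finsupp.mem_support_iff]
        constructor
        · rintro rfl; simp at hq
        · intro h; exact hq (by rw [h, mul_zero])
      have hcard' : g.support.card ≤ N := by
        have := Finset.card_le_card hsub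
        rw [Finset.card_erase_of_mem hk's] at this
        omega
      refine IH g hgp hcard' k ?_
      rw [hgap]
      refine mul_ne_zero (sub_ne_zero.2 ?_) hk
      exact_mod_cast fun h => ha (by exact_mod_cast h.symm)
    · push_neg at hs
      have hfk : f = Finsupp.single k (f k) := by
        ext q
        by_cases hq : q = k
        · subst hq; simp
        · rw [Finsupp.single_eq_of_ne' (Ne.symm hq)]
          by_contra hne
          exact hq (hs q (Finsupp.mem_support_iff.2 hne))
      have : Finsupp.single k (1:ℂ) = (f k)⁻¹ • f := by
        nth_rewrite 2 [hfk]
        rw [Finsupp.smul_single, smul_eq_mul, inv_mul_cancel₀ hk]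
      rw [this]
      exact p.smul_mem _ hf


/-- the monomial concentrated at `ℓ₀` -/
def ctr (ℓ₀ : Fin n) (m : ℤ) : Fin n → ℤ := fun i => if i = ℓ₀ then m else 0

lemma sum_ctr (ℓ₀ : Fin n) (m : ℤ) : ∑ i, ctr ℓ₀ m i = m := by
  simp [ctr, Finset.sum_ite_eq']

/-- measure: total absolute size away from ℓ₀ -/
def msr (ℓ₀ : Fin n) (k : Fin n → ℤ) : ℕ :=
  ∑ b ∈ Finset.univ.erase ℓ₀, (k b).natAbs

lemma msr_eq_zero {l0 : Fin n} {k : Fin n → ℤ} (h : msr l0 k = 0) :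
    k = ctr l0 (∑ i, k i) := by
  have hz : ∀ b ∈ Finset.univ.erase l0, (k b).natAbs = 0 := by
    unfold msr at h; rw [Finset.sum_eq_zero_iff] at h; exact h
  funext x
  by_cases hx : x = l0
  · subst hx
    have hs : ∑ i, k i = k x := by
      rw [← Finset.add_sum_erase Finset.univ k (Finset.mem_univ x),
        Finset.sum_eq_zero (fun b hb => Int.natAbs_eq_zero.1 (hz b hb))]
      ring
    simp [ctr, hs]
  · have h0 : (k x).natAbs = 0 := hz x (Finset.mem_erase.2 ⟨hx, Finset.mem_univ x⟩)
    simp [ctr, hx, Int.natAbs_eq_zero.1 h0]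

lemma msr_sh {l0 b : Fin n} (hb : b ≠ l0) (k : Fin n → ℤ) (hkb : k b ≠ 0) :
    (if 0 < k b then msr l0 (sh k l0 b) else msr l0 (sh k b l0)) = msr l0 k - 1 ∧
      1 ≤ msr l0 k := by
  have hmem : b ∈ Finset.univ.erase l0 := Finset.mem_erase.2 ⟨hb, Finset.mem_univ b⟩
  have h1 : 1 ≤ msr l0 k := by
    calc 1 ≤ (k b).natAbs := by omega
    _ ≤ msr l0 k := Finset.single_le_sum (f := fun i => (k i).natAbs)
        (fun i _ => Nat.zero_le _) hmem
  refine ⟨?_, h1⟩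
  have key : ∀ k' : Fin n → ℤ, (∀ i ∈ (Finset.univ.erase l0).erase b, k' i = k i) →
      (k' b).natAbs = (k b).natAbs - 1 → msr l0 k' = msr l0 k - 1 := by
    intro k' hagree hkb'
    unfold msr
    rw [← Finset.add_sum_erase _ (fun x => (k' x).natAbs) hmem,
      ← Finset.add_sum_erase _ (fun x => (k x).natAbs) hmem]
    have : ∑ x ∈ (Finset.univ.erase l0).erase b, (k' x).natAbs
        = ∑ x ∈ (Finset.univ.erase l0).erase b, (k x).natAbs :=
      Finset.sum_congr rfl (fun i hi => by rw [hagree i hi])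
    omega
  split
  · next hpos =>
    refine key _ (fun i hi => ?_) ?_
    · rw [Finset.mem_erase, Finset.mem_erase] at hi
      simp [sh, hi.1, hi.2.1]
    · have : sh k l0 b b = k b - 1 := by simp [sh, hb]
      rw [this]; omega
  · next hpos =>
    refine key _ (fun i hi => ?_) ?_
    · rw [Finset.mem_erase, Finset.mem_erase] at hi
      simp [sh, hi.1, hi.2.1]
    · have : sh k b l0 b = k b + 1 := by simp [sh, hb]
      rw [this]; omega


lemma sh_sh (k : Fin n → ℤ) (a b : Fin n) : sh (sh k a b) b a = k := by
  funext i; simp only [sh]; ring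

lemma coeff_ok {α : Fin n → ℂ} (hα : ∀ ℓ, 0 ≤ (α ℓ).re ∧ (α ℓ).re < 1)
    (b : Fin n) (k : Fin n → ℤ) (h : α b = 0 → k b ≠ 0) : ((k b : ℂ) + α b) ≠ 0 := by
  by_cases hb : α b = 0
  · rw [hb, add_zero]
    exact_mod_cast h hb
  · exact coeff_ne hb (hα b).1 (hα b).2 _

variable {α : Fin n → ℂ} {p : Submodule ℂ (Lmon n)} {l0 : Fin n}

lemma to_center (hα : ∀ ℓ, 0 ≤ (α ℓ).re ∧ (α ℓ).re < 1) (hl0 : α l0 ≠ 0)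
    (hp : glInv α p) :
    ∀ N : ℕ, ∀ k : Fin n → ℤ, msr l0 k ≤ N → Finsupp.single k (1:ℂ) ∈ p →
      Finsupp.single (ctr l0 (∑ i, k i)) (1:ℂ) ∈ p := by
  intro N
  induction N with
  | zero =>
    intro k hm hk
    rw [← msr_eq_zero (Nat.le_zero.1 hm)]
    exact hk
  | succ N IH =>
    intro k hm hk
    by_cases h0 : msr l0 k = 0
    · rw [← msr_eq_zero h0]; exact hk
    · obtain ⟨b, hbmem, hbne⟩ := Finset.exists_ne_zero_of_sum_ne_zero h0
      have hb : b ≠ l0 := (Finset.mem_erase.1 hbmem).1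
      have hkb : k b ≠ 0 := by omega
      obtain ⟨hdec, hge1⟩ := msr_sh hb k hkb
      by_cases hpos : 0 < k b
      · rw [if_pos hpos] at hdec
        have hstep := step hp hk l0 b (coeff_ok hα b k (fun _ => hkb))
        have := IH (sh k l0 b) (by omega) hstep
        rwa [sum_sh] at this
      · rw [if_neg hpos] at hdec
        have hstep := step hp hk b l0 (coeff_ok hα l0 k (fun h => absurd h hl0))
        have := IH (sh k b l0) (by omega) hstep
        rwa [sum_sh] at this

lemma from_center (hα : ∀ ℓ, 0 ≤ (α ℓ).re ∧ (α ℓ).re < 1) (hl0 : α l0 ≠ 0)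
    (hp : glInv α p) :
    ∀ N : ℕ, ∀ k : Fin n → ℤ, msr l0 k ≤ N → (∀ ℓ, α ℓ = 0 → 0 ≤ k ℓ) →
      Finsupp.single (ctr l0 (∑ i, k i)) (1:ℂ) ∈ p → Finsupp.single k (1:ℂ) ∈ p := by
  intro N
  induction N with
  | zero =>
    intro k hm _ hc
    rw [msr_eq_zero (Nat.le_zero.1 hm)]
    exact hc
  | succ N IH =>
    intro k hm hnn hc
    by_cases h0 : msr l0 k = 0
    · rw [msr_eq_zero h0]; exact hc
    · obtain ⟨b, hbmem, hbne⟩ := Finset.exists_ne_zero_of_sum_ne_zero h0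
      have hb : b ≠ l0 := (Finset.mem_erase.1 hbmem).1
      have hkb : k b ≠ 0 := by omega
      obtain ⟨hdec, hge1⟩ := msr_sh hb k hkb
      -- the predecessor is k'' = sh k l0 b  (when k b > 0)  or sh k b l0 (when k b < 0)
      by_cases hpos : 0 < k b
      · rw [if_pos hpos] at hdec
        set k'' := sh k l0 b with hk''
        have hnn'' : ∀ ℓ, α ℓ = 0 → 0 ≤ k'' ℓ := by
          intro ℓ hℓ
          have := hnn ℓ hℓ
          by_cases h1 : ℓ = b
          · subst h1; simp [hk'', sh, hb]; omega
          · by_cases h2 : ℓ = l0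
            · exact absurd (h2 ▸ hℓ) hl0
            · simpa [hk'', sh, h1, h2] using this
        have hsum'' : ∑ i, k'' i = ∑ i, k i := sum_sh k l0 b
        have hin'' : Finsupp.single k'' (1:ℂ) ∈ p :=
          IH k'' (by omega) hnn'' (by rw [hsum'']; exact hc)
        have hco : ((k'' l0 : ℂ) + α l0) ≠ 0 := coeff_ok hα l0 k''
          (fun h => absurd h hl0)
        have := step hp hin'' b l0 hco
        rwa [hk'', sh_sh] at this
      · rw [if_neg hpos] at hdec
        have hαb : α b ≠ 0 := by
          intro h
          have := hnn b h
          omega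
        set k'' := sh k b l0 with hk''
        have hnn'' : ∀ ℓ, α ℓ = 0 → 0 ≤ k'' ℓ := by
          intro ℓ hℓ
          have := hnn ℓ hℓ
          by_cases h1 : ℓ = b
          · exact absurd (h1 ▸ hℓ) hαb
          · by_cases h2 : ℓ = l0
            · exact absurd (h2 ▸ hℓ) hl0
            · simpa [hk'', sh, h1, h2] using this
        have hsum'' : ∑ i, k'' i = ∑ i, k i := sum_sh k b l0
        have hin'' : Finsupp.single k'' (1:ℂ) ∈ p :=
          IH k'' (by omega) hnn'' (by rw [hsum'']; exact hc)
        have hco : ((k'' b : ℂ) + α b) ≠ 0 := coeff_ok hα b k''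
          (fun h => absurd h hαb)
        have := step hp hin'' l0 b hco
        rwa [hk'', sh_sh] at this


/-- the submodule of elements supported on degree-m exponents -/
noncomputable def degMod (n : ℕ) (m : ℤ) : Submodule ℂ (Lmon n) where
  carrier := {f | ∀ k, f k ≠ 0 → ∑ i, k i = m}
  zero_mem' := by intro k hk; simp at hk
  add_mem' := by
    intro f g hf hg k hk
    rw [Finsupp.add_apply] at hk
    by_cases h : f k = 0
    · exact hg k (by rw [h, zero_add] at hk; exact hk)
    · exact hf k h
  smul_mem' := by
    intro c f hf k hk
    rw [Finsupp.smul_apply, smul_eq_mul] at hk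
    exact hf k (right_ne_zero_of_mul hk)

lemma mem_LmodJ_deg {α : Fin n → ℂ} {m j : ℤ} {f : Lmon n} (hf : f ∈ LmodJ α m j)
    {k : Fin n → ℤ} (hk : f k ≠ 0) : ∑ i, k i = m := by
  have hle : LmodJ α m j ≤ degMod n m := by
    rw [LmodJ, Submodule.span_le]
    rintro f ⟨k', rfl, hsum, -⟩
    intro q hq
    have : q = k' := by
      by_contra hne
      rw [Finsupp.single_eq_of_ne' (Ne.symm hne)] at hq
      exact hq rfl
    rw [this]; exact hsum
  exact hle hf k hk

end Aux

open scoped Classical in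
/-- For `α ≠ 0` and `0 ≤ j ≤ |I_α|`, every nonzero `𝔤𝔩(n)`-submodule of
`L_n^α(m,j)` contains the simple module `V_n^α(m,∅)`; consequently
`L_n^α(m,j)` is indecomposable. -/
theorem stmt_15 (n : ℕ) (α : Fin n → ℂ)
    (hα : ∀ ℓ, 0 ≤ (α ℓ).re ∧ (α ℓ).re < 1) (hα0 : α ≠ 0)
    (m : ℤ) (j : ℕ)
    (hj : j ≤ (Finset.univ.filter (fun ℓ : Fin n => α ℓ = 0)).card) :
    (∀ p : Submodule ℂ (Lmon n), glInv α p → p ≤ LmodJ α m j → p ≠ ⊥ →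
      Vmod α m ∅ ≤ p) ∧
    (∀ M N : Submodule ℂ (Lmon n), glInv α M → glInv α N →
      M ⊔ N = LmodJ α m j → M ⊓ N = ⊥ → M = ⊥ ∨ N = ⊥) := by
  obtain ⟨l0, hl0⟩ : ∃ ℓ, α ℓ ≠ 0 := Function.ne_iff.1 hα0
  have part1 : ∀ p : Submodule ℂ (Lmon n), glInv α p → p ≤ LmodJ α m j → p ≠ ⊥ →
      Vmod α m ∅ ≤ p := by
    intro p hpinv hple hpne
    obtain ⟨f, hfp, hf0⟩ := Submodule.exists_mem_ne_zero_of_ne_bot hpne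
    obtain ⟨k, hk⟩ := Finsupp.ne_iff.1 hf0
    have hk' : f k ≠ 0 := by simpa using hk
    have hmono := Aux.extract hpinv f.support.card f hfp le_rfl k hk'
    have hdeg : ∑ i, k i = m := Aux.mem_LmodJ_deg (hple hfp) hk'
    have hctr := Aux.to_center hα hl0 hpinv (Aux.msr l0 k) k le_rfl hmono
    rw [hdeg] at hctr
    rw [Vmod, Submodule.span_le]
    rintro g ⟨k', rfl, hsum, hcond⟩
    have hnn : ∀ ℓ, α ℓ = 0 → 0 ≤ k' ℓ := by
      intro ℓ hℓ
      by_contra h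
      exact absurd (hcond ℓ hℓ (by omega)) (Finset.notMem_empty ℓ)
    exact Aux.from_center hα hl0 hpinv (Aux.msr l0 k') k' le_rfl hnn
      (by rw [hsum]; exact hctr)
  refine ⟨part1, ?_⟩
  intro M N hM hN hsup hinf
  by_contra hcon
  push_neg at hcon
  obtain ⟨hM0, hN0⟩ := hcon
  have hML : M ≤ LmodJ α m j := hsup ▸ le_sup_left
  have hNL : N ≤ LmodJ α m j := hsup ▸ le_sup_right
  have h1 := part1 M hM hML hM0
  have h2 := part1 N hN hNL hN0
  have hV : Vmod α m ∅ ≤ ⊥ := hinf ▸ le_inf h1 h2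
  have hw : Finsupp.single (Aux.ctr l0 m) (1:ℂ) ∈ Vmod α m ∅ := by
    apply Submodule.subset_span
    refine ⟨Aux.ctr l0 m, rfl, Aux.sum_ctr l0 m, ?_⟩
    intro ℓ hℓ hneg
    exfalso
    by_cases h : ℓ = l0
    · exact hl0 (h ▸ hℓ)
    · simp [Aux.ctr, h] at hneg
  have hbot := hV hw
  rw [Submodule.mem_bot] at hbot
  exact one_ne_zero (Finsupp.single_eq_zero.1 hbot)
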